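/- Let g(τ) = 1 on [0,1/4], 0 on (1/4,3/4), −1 on [3/4,1], and let h : [0,1] → ℝ satisfy h(τ+1/2) = −h(τ) for a.e. τ ∈ (0,1/2). If additionally h satisfies the reflection symmetry h(τ) = h(1/2−τ) for a.e. τ ∈ (0,1/2) (the even-index PWM symmetry), then ‖g − h‖²_{L²([0,1])} ≥ 1/4 · ‖g‖²_{L²([0,1])} > 0; hence no sequence of such functions converges to g in L²([0,1]). -/

import Mathlib

open MeasureTheory

noncomputable def g3 (τ : ℝ) : ℝ :=
  if τ ≤ 1/4 then 1 else if τ < 3/4 then 0 else -1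

lemma g3_meas : Measurable g3 := by
  unfold g3
  exact Measurable.ite (measurableSet_le measurable_id measurable_const) measurable_const
    (Measurable.ite (measurableSet_lt measurable_id measurable_const) measurable_const
      measurable_const)

lemma g3_abs_le (τ : ℝ) : |g3 τ| ≤ 1 := by
  unfold g3; split_ifs <;> norm_num

lemma sq_int (h : ℝ → ℝ) (hmeas : Measurable h) (f : ℝ → ℝ) (hf : Measurable f)
    (hbd : ∀ x, |f x| ≤ 1) {a b : ℝ}
    (hint : IntervalIntegrable (fun τ => (h τ) ^ 2) volume a b) :
    IntervalIntegrable (fun τ => (f τ - h τ) ^ 2) volume a b := by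
  rw [intervalIntegrable_iff] at *
  have hc : IntegrableOn (fun _ => (1 : ℝ)) (Set.uIoc a b) volume :=
    integrableOn_const measure_Ioc_lt_top.ne
  apply Integrable.mono' (g := fun τ => 2 * (1 + (h τ) ^ 2))
  · exact (hc.add hint).const_mul 2
  · exact ((hf.sub hmeas).pow_const 2).aestronglyMeasurable
  · filter_upwards with τ
    have h1 := abs_le.mp (hbd τ)
    have h2 : ‖(f τ - h τ) ^ 2‖ = (f τ - h τ) ^ 2 := by
      rw [Real.norm_eq_abs, abs_of_nonneg (sq_nonneg _)]
    rw [h2]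
    nlinarith [sq_nonneg (f τ + h τ), sq_nonneg (f τ - h τ)]

lemma g3sq_int (a b : ℝ) : IntervalIntegrable (fun τ => (g3 τ) ^ 2) volume a b := by
  rw [intervalIntegrable_iff]
  apply Integrable.mono' (g := fun _ => (1 : ℝ))
    (integrableOn_const measure_Ioc_lt_top.ne)
  · exact (g3_meas.pow_const 2).aestronglyMeasurable
  · filter_upwards with τ
    have h1 := abs_le.mp (g3_abs_le τ)
    rw [Real.norm_eq_abs, abs_of_nonneg (sq_nonneg _)]
    nlinarith

lemma g3sq_val : (∫ τ in (0:ℝ)..1, (g3 τ) ^ 2) = 1/2 := by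
  have hs1 : (∫ τ in (0:ℝ)..1, (g3 τ) ^ 2)
      = (∫ τ in (0:ℝ)..(1/4), (g3 τ) ^ 2) + (∫ τ in (1/4:ℝ)..(3/4), (g3 τ) ^ 2)
        + (∫ τ in (3/4:ℝ)..1, (g3 τ) ^ 2) := by
    rw [intervalIntegral.integral_add_adjacent_intervals (g3sq_int 0 (1/4)) (g3sq_int (1/4) (3/4)),
      intervalIntegral.integral_add_adjacent_intervals (g3sq_int 0 (3/4)) (g3sq_int (3/4) 1)]
  have e1 : (∫ τ in (0:ℝ)..(1/4), (g3 τ) ^ 2) = 1/4 := by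
    rw [intervalIntegral.integral_congr (g := fun _ => (1:ℝ))]
    · simp
    · intro τ hτ
      rw [Set.uIcc_of_le (by norm_num)] at hτ
      simp only [g3, if_pos hτ.2]
      norm_num
  have e2 : (∫ τ in (1/4:ℝ)..(3/4), (g3 τ) ^ 2) = 0 := by
    rw [intervalIntegral.integral_congr_ae (g := fun _ => (0:ℝ))]
    · simp
    · have h34 : ∀ᵐ (τ : ℝ) ∂volume, τ ≠ (3/4 : ℝ) := by
        rw [ae_iff]
        simpa using measure_singleton (μ := volume) (3/4 : ℝ)
      filter_upwards [h34] with τ hτ hmem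
      rw [Set.uIoc_of_le (by norm_num)] at hmem
      have hlt : τ < 3/4 := lt_of_le_of_ne hmem.2 hτ
      simp only [g3, if_neg (by linarith [hmem.1] : ¬ τ ≤ 1/4), if_pos hlt]
      norm_num
  have e3 : (∫ τ in (3/4:ℝ)..1, (g3 τ) ^ 2) = 1/4 := by
    rw [intervalIntegral.integral_congr (g := fun _ => (1:ℝ))]
    · norm_num
    · intro τ hτ
      rw [Set.uIcc_of_le (by norm_num)] at hτ
      simp only [g3, if_neg (by linarith [hτ.1] : ¬ τ ≤ 1/4),
        if_neg (by linarith [hτ.1] : ¬ τ < 3/4)]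
      norm_num
  rw [hs1, e1, e2, e3]; norm_num

theorem stmt19 (h : ℝ → ℝ) (hmeas : Measurable h)
    (hint : IntervalIntegrable (fun τ => (h τ) ^ 2) volume 0 1)
    (hanti : ∀ᵐ τ ∂volume, τ ∈ Set.Ioo (0:ℝ) (1/2) → h (τ + 1/2) = -h τ)
    (heven : ∀ᵐ τ ∂volume, τ ∈ Set.Ioo (0:ℝ) (1/2) → h τ = h (1/2 - τ)) :
    (∫ τ in (0:ℝ)..1, (g3 τ - h τ) ^ 2)
        ≥ 1/4 * ∫ τ in (0:ℝ)..1, (g3 τ) ^ 2 ∧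
      0 < 1/4 * ∫ τ in (0:ℝ)..1, (g3 τ) ^ 2 := by
  have hsub : ∀ a b : ℝ, 0 ≤ a → a ≤ b → b ≤ 1 →
      IntervalIntegrable (fun τ => (h τ) ^ 2) volume a b := by
    intro a b ha hab hb
    apply hint.mono_set
    rw [Set.uIcc_of_le (by norm_num : (0:ℝ) ≤ 1), Set.uIcc_of_le hab]
    exact Set.Icc_subset_Icc ha hb
  have Fint : ∀ a b : ℝ, 0 ≤ a → a ≤ b → b ≤ 1 →
      IntervalIntegrable (fun τ => (g3 τ - h τ) ^ 2) volume a b :=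
    fun a b ha hab hb => sq_int h hmeas g3 g3_meas g3_abs_le (hsub a b ha hab hb)
  have hsplit : (∫ τ in (0:ℝ)..1, (g3 τ - h τ) ^ 2)
      = (∫ τ in (0:ℝ)..(1/4), (g3 τ - h τ) ^ 2)
        + (∫ τ in (1/4:ℝ)..(1/2), (g3 τ - h τ) ^ 2)
        + (∫ τ in (1/2:ℝ)..1, (g3 τ - h τ) ^ 2) := by
    rw [intervalIntegral.integral_add_adjacent_intervals
        (Fint 0 (1/4) (by norm_num) (by norm_num) (by norm_num)) (Fint (1/4) (1/2) (by norm_num) (by norm_num) (by norm_num)),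
      intervalIntegral.integral_add_adjacent_intervals
        (Fint 0 (1/2) (by norm_num) (by norm_num) (by norm_num)) (Fint (1/2) 1 (by norm_num) (by norm_num) (by norm_num))]
  -- first piece: (1 - h)^2
  have e1 : (∫ τ in (0:ℝ)..(1/4), (g3 τ - h τ) ^ 2)
      = ∫ τ in (0:ℝ)..(1/4), (1 - h τ) ^ 2 := by
    apply intervalIntegral.integral_congr
    intro τ hτ
    rw [Set.uIcc_of_le (by norm_num)] at hτ
    simp only [g3, if_pos hτ.2]
  -- second piece: h^2
  have e2 : (∫ τ in (1/4:ℝ)..(1/2), (g3 τ - h τ) ^ 2)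
      = ∫ τ in (1/4:ℝ)..(1/2), (h τ) ^ 2 := by
    apply intervalIntegral.integral_congr_ae
    filter_upwards with τ hmem
    rw [Set.uIoc_of_le (by norm_num)] at hmem
    simp only [g3, if_neg (by linarith [hmem.1] : ¬ τ ≤ 1/4),
      if_pos (by linarith [hmem.2] : τ < 3/4)]
    ring
  -- reflection: ∫_{1/4}^{1/2} h^2 = ∫_0^{1/4} h^2
  have e3 : (∫ τ in (1/4:ℝ)..(1/2), (h τ) ^ 2) = ∫ τ in (0:ℝ)..(1/4), (h τ) ^ 2 := by
    have sub1 : (∫ τ in (0:ℝ)..(1/4), (h (1/2 - τ)) ^ 2)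
        = ∫ τ in (1/4:ℝ)..(1/2), (h τ) ^ 2 := by
      have := intervalIntegral.integral_comp_sub_left (a := (0:ℝ)) (b := 1/4)
        (fun x => (h x) ^ 2) (1/2)
      norm_num at this
      convert this using 2 <;> norm_num
    rw [← sub1]
    apply intervalIntegral.integral_congr_ae
    filter_upwards [heven] with τ hτ hmem
    rw [Set.uIoc_of_le (by norm_num)] at hmem
    rw [hτ ⟨hmem.1, by linarith [hmem.2]⟩]
  -- integrability of the reflected pieces on [0,1/4]
  have hint14 := hsub 0 (1/4) le_rfl (by norm_num) (by norm_num)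
  have h1int : IntervalIntegrable (fun τ => (1 - h τ) ^ 2) volume 0 (1/4) :=
    sq_int h hmeas (fun _ => 1) measurable_const (by norm_num) hint14
  have key : (∫ τ in (0:ℝ)..(1/4), (1 - h τ) ^ 2) + (∫ τ in (0:ℝ)..(1/4), (h τ) ^ 2)
      ≥ 1/8 := by
    rw [← intervalIntegral.integral_add h1int hint14]
    have : (∫ τ in (0:ℝ)..(1/4), (1/2 : ℝ)) ≤
        ∫ τ in (0:ℝ)..(1/4), ((1 - h τ) ^ 2 + (h τ) ^ 2) := by
      apply intervalIntegral.integral_mono_on (by norm_num) (intervalIntegrable_const)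
        (h1int.add hint14)
      intro τ _
      nlinarith [sq_nonneg (2 * h τ - 1)]
    simpa using le_trans (by norm_num) this
  have last_nonneg : 0 ≤ ∫ τ in (1/2:ℝ)..1, (g3 τ - h τ) ^ 2 :=
    intervalIntegral.integral_nonneg (by norm_num) (fun τ _ => sq_nonneg _)
  constructor
  · rw [g3sq_val, hsplit, e1, e2, e3]
    linarith
  · rw [g3sq_val]; norm_num
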